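/- Let X be a compact subset of ℝ, T : X → X Borel measurable, and μ a T-invariant Borel probability measure. Suppose there exists a constant c > 0 such that for every Lipschitz function f : X → ℝ, the auto-covariance function Cov_f(k) = ∫ f·(f∘T^k) dμ − (∫ f dμ)² satisfies Σ_{k=1}^{∞} |Cov_f(k)| ≤ c ‖f‖_Lip², where ‖f‖_Lip = Lip(f) + ‖f‖_∞. Then there exists a constant B > 0 such that for all n ≥ 1, ∫ κ(E_n(x), μ) dμ(x) ≤ B n^{−1/4}, where E_n(x) = (1/n) Σ_{i=0}^{n−1} δ_{T^i x} is the empirical measure. -/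

import Mathlib

open MeasureTheory Real

noncomputable section

def kantorovich {α : Type*} [MeasurableSpace α] [PseudoMetricSpace α]
    (ν₁ ν₂ : Measure α) : ℝ :=
  ⨆ g : {g : α → ℝ // LipschitzWith 1 g}, (∫ x, g.1 x ∂ν₁ - ∫ x, g.1 x ∂ν₂)


lemma my_integrable_dirac (f : ℝ → ℝ) (a : ℝ) : Integrable f (Measure.dirac a) :=
  (integrable_congr (ae_eq_dirac f)).mpr (integrable_const _)

def empiricalMeasure (T : ℝ → ℝ) (n : ℕ) (x : ℝ) : Measure ℝ :=
  (n : ENNReal)⁻¹ • ∑ i ∈ Finset.range n, Measure.dirac (T^[i] x)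

lemma integral_empirical (T : ℝ → ℝ) (n : ℕ) (x : ℝ) (f : ℝ → ℝ) :
    ∫ y, f y ∂(empiricalMeasure T n x) = (n : ℝ)⁻¹ * ∑ i ∈ Finset.range n, f (T^[i] x) := by
  rw [empiricalMeasure, integral_smul_measure,
    integral_finset_sum_measure (fun i _ => my_integrable_dirac f _)]
  simp [integral_dirac, smul_eq_mul]

/-- the hat function -/
def hatF (t ε x : ℝ) : ℝ := min (max (x - t) 0) ε

lemma hatF_lip (t ε : ℝ) : LipschitzWith 1 (hatF t ε) := by
  apply LipschitzWith.of_dist_le_mul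
  intro x y
  rw [NNReal.coe_one, one_mul, Real.dist_eq, Real.dist_eq]
  unfold hatF
  calc |min (max (x - t) 0) ε - min (max (y - t) 0) ε|
      ≤ max |max (x - t) 0 - max (y - t) 0| |ε - ε| := abs_min_sub_min_le_max _ _ _ _
    _ ≤ |x - y| := by
        rw [sub_self, abs_zero]
        refine max_le ?_ (abs_nonneg _)
        calc |max (x - t) 0 - max (y - t) 0| ≤ |(x - t) - (y - t)| := abs_max_sub_max_le_abs _ _ _
          _ = |x - y| := by ring_nf

lemma hatF_nonneg (t ε x : ℝ) (hε : 0 ≤ ε) : 0 ≤ hatF t ε x := le_min (le_max_right _ _) hε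

lemma hatF_le (t ε x : ℝ) : hatF t ε x ≤ ε := min_le_right _ _

lemma hatF_abs_le (t ε x : ℝ) (hε : 0 ≤ ε) : |hatF t ε x| ≤ ε :=
  abs_le.2 ⟨by linarith [hatF_nonneg t ε x hε], hatF_le t ε x⟩

lemma hatF_of_le (t ε x : ℝ) (hε : 0 ≤ ε) (h : x ≤ t) : hatF t ε x = 0 := by
  unfold hatF
  rw [max_eq_right (by linarith), min_eq_left hε]

lemma hatF_of_ge (t ε x : ℝ) (hε : 0 ≤ ε) (h : t + ε ≤ x) : hatF t ε x = ε := by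
  unfold hatF
  rw [max_eq_left (by linarith), min_eq_right (by linarith)]

lemma hatF_continuous (t ε : ℝ) : Continuous (hatF t ε) := (hatF_lip t ε).continuous

lemma hatF_measurable (t ε : ℝ) : Measurable (hatF t ε) := (hatF_continuous t ε).measurable


def covFn (T : ℝ → ℝ) (μ : Measure ℝ) (f : ℝ → ℝ) (k : ℕ) : ℝ :=
  ∫ x, f x * f (T^[k] x) ∂μ - (∫ x, f x ∂μ) ^ 2

lemma variance_bound (T : ℝ → ℝ) (hT : Measurable T) (μ : Measure ℝ) [IsProbabilityMeasure μ]
    (hinv : μ.map T = μ) (f : ℝ → ℝ) (hf : Measurable f) (Mf : ℝ)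
    (hMf : ∀ x, |f x| ≤ Mf) (S : ℝ)
    (hsum : Summable (fun k : ℕ => |covFn T μ f (k + 1)|))
    (hS : ∑' k : ℕ, |covFn T μ f (k + 1)| ≤ S) (n : ℕ) (hn : 1 ≤ n) :
    ∫ x, ((n : ℝ)⁻¹ * ∑ i ∈ Finset.range n, f (T^[i] x) - ∫ y, f y ∂μ) ^ 2 ∂μ
      ≤ (Mf ^ 2 + 2 * S) / n := by
  have hn0 : (0:ℝ) < n := by exact_mod_cast hn
  have hn0' : (n:ℝ) ≠ 0 := ne_of_gt hn0
  have hMf0 : 0 ≤ Mf := le_trans (abs_nonneg _) (hMf 0)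
  have hS0 : 0 ≤ S := le_trans (tsum_nonneg fun k => abs_nonneg _) hS
  -- iterated invariance
  have hmap : ∀ i : ℕ, μ.map (T^[i]) = μ := by
    intro i
    induction i with
    | zero => simp
    | succ i ih =>
      rw [Function.iterate_succ', ← Measure.map_map hT (hT.iterate i), ih, hinv]
  have hinteg : ∀ (g : ℝ → ℝ), Measurable g → ∀ i : ℕ,
      ∫ x, g (T^[i] x) ∂μ = ∫ x, g x ∂μ := by
    intro g hg i
    have h := integral_map (φ := T^[i]) (μ := μ) (hT.iterate i).aemeasurable
      (hg.aestronglyMeasurable (μ := μ.map (T^[i])))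
    rw [hmap i] at h
    exact h.symm
  set m : ℝ := ∫ y, f y ∂μ with hm
  have hm_abs : |m| ≤ Mf := by
    have := norm_integral_le_of_norm_le_const (μ := μ) (f := f) (C := Mf)
      (ae_of_all _ fun x => by simpa using hMf x)
    simpa using this
  -- measurability/integrability of basic pieces
  have hmi : ∀ i : ℕ, Measurable fun x => f (T^[i] x) := fun i => hf.comp (hT.iterate i)
  have hfi : ∀ i : ℕ, Integrable (fun x => f (T^[i] x)) μ := fun i =>
    (integrable_const Mf).mono' (hmi i).aestronglyMeasurable
      (ae_of_all _ fun x => by simpa using hMf _)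
  have hfij : ∀ i j : ℕ, Integrable (fun x => f (T^[i] x) * f (T^[j] x)) μ := by
    intro i j
    refine (integrable_const (Mf * Mf)).mono' ((hmi i).mul (hmi j)).aestronglyMeasurable
      (ae_of_all _ fun x => ?_)
    rw [norm_eq_abs, abs_mul]
    exact mul_le_mul (hMf _) (hMf _) (abs_nonneg _) hMf0
  -- shift identity
  have hshift : ∀ i j : ℕ, i ≤ j →
      ∫ x, f (T^[i] x) * f (T^[j] x) ∂μ = ∫ x, f x * f (T^[j - i] x) ∂μ := by
    intro i j hij
    have h1 : ∀ x, f (T^[i] x) * f (T^[j] x) = (fun y => f y * f (T^[j - i] y)) (T^[i] x) := by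
      intro x
      simp only []
      congr 2
      rw [← Function.iterate_add_apply]
      congr 1
      omega
    calc ∫ x, f (T^[i] x) * f (T^[j] x) ∂μ
        = ∫ x, (fun y => f y * f (T^[j - i] y)) (T^[i] x) ∂μ := by
          exact integral_congr_ae (ae_of_all _ h1)
      _ = ∫ x, f x * f (T^[j - i] x) ∂μ := hinteg _ (hf.mul (hmi _)) i
  set C : ℕ → ℝ := covFn T μ f with hC
  set g : ℕ → ℝ → ℝ := fun i x => f (T^[i] x) - m with hg
  have hgm : ∀ i : ℕ, Measurable (g i) := fun i => (hmi i).sub measurable_const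
  have hgint : ∀ i j : ℕ, Integrable (fun x => g i x * g j x) μ := by
    intro i j
    refine (integrable_const ((Mf + Mf) * (Mf + Mf))).mono'
      ((hgm i).mul (hgm j)).aestronglyMeasurable (ae_of_all _ fun x => ?_)
    rw [norm_eq_abs, abs_mul]
    have hb : ∀ k : ℕ, |g k x| ≤ Mf + Mf := fun k =>
      le_trans (abs_sub _ _) (add_le_add (hMf _) hm_abs)
    exact mul_le_mul (hb i) (hb j) (abs_nonneg _) (by linarith)
  have hEgg : ∀ i j : ℕ, i ≤ j → ∫ x, g i x * g j x ∂μ = C (j - i) := by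
    intro i j hij
    have hexp : (fun x => g i x * g j x) = fun x =>
        f (T^[i] x) * f (T^[j] x) - m * f (T^[i] x) - m * f (T^[j] x) + m ^ 2 := by
      funext x; simp only [hg]; ring
    have I4 : Integrable (fun x => m * f (T^[i] x)) μ := (hfi i).const_mul m
    have I5 : Integrable (fun x => m * f (T^[j] x)) μ := (hfi j).const_mul m
    have I3 : Integrable (fun x => f (T^[i] x) * f (T^[j] x) - m * f (T^[i] x)) μ :=
      (hfij i j).sub I4
    have I2 : Integrable
        (fun x => f (T^[i] x) * f (T^[j] x) - m * f (T^[i] x) - m * f (T^[j] x)) μ := I3.sub I5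
    rw [hexp, integral_add I2 (integrable_const _), integral_sub I3 I5,
      integral_sub (hfij i j) I4, integral_const_mul, integral_const_mul,
      hinteg f hf i, hinteg f hf j, hshift i j hij, integral_const]
    simp only [probReal_univ, smul_eq_mul, one_mul]
    simp only [hC, covFn, ← hm]
    ring
  have hEgg' : ∀ i j : ℕ, ∫ x, g i x * g j x ∂μ = C (Nat.dist i j) := by
    intro i j
    rcases le_total i j with h | h
    · rw [hEgg i j h, Nat.dist_eq_sub_of_le h]
    · rw [show (fun x => g i x * g j x) = fun x => g j x * g i x from funext fun x => mul_comm _ _,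
        hEgg j i h, Nat.dist_comm, Nat.dist_eq_sub_of_le h]
  -- bound on |C 0|
  have hC0 : |C 0| ≤ Mf ^ 2 := by
    have h1 : C 0 = (∫ x, f x * f x ∂μ) - m ^ 2 := by
      simp only [hC, covFn, Function.iterate_zero, id_eq, ← hm]
    have h2 : 0 ≤ ∫ x, f x * f x ∂μ :=
      integral_nonneg fun x => mul_self_nonneg _
    have h3 : ∫ x, f x * f x ∂μ ≤ Mf ^ 2 := by
      have hint : Integrable (fun x => f x * f x) μ := by simpa using hfij 0 0
      have : ∫ x, f x * f x ∂μ ≤ ∫ _x, Mf ^ 2 ∂μ :=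
        integral_mono hint (integrable_const _)
          (fun x => by nlinarith [hMf x, sq_abs (f x), abs_nonneg (f x)])
      simpa using this
    have h4 : m ^ 2 ≤ Mf ^ 2 := by
      have := abs_le.mp hm_abs
      nlinarith
    have h5 : 0 ≤ m ^ 2 := sq_nonneg m
    rw [h1]
    rw [abs_le]
    constructor <;> nlinarith
  -- row bound
  have hrow : ∀ i ∈ Finset.range n, ∑ j ∈ Finset.range n, |C (Nat.dist i j)| ≤ Mf ^ 2 + 2 * S := by
    intro i hi
    rw [Finset.mem_range] at hi
    have hsplit : ∑ j ∈ Finset.range n, |C (Nat.dist i j)|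
        = ∑ j ∈ Finset.range (i + 1), |C (Nat.dist i j)|
          + ∑ j ∈ Finset.Ico (i + 1) n, |C (Nat.dist i j)| :=
      (Finset.sum_range_add_sum_Ico _ (by omega)).symm
    have hA : ∑ j ∈ Finset.range (i + 1), |C (Nat.dist i j)|
        = (∑ j ∈ Finset.range i, |C (Nat.dist i j)|) + |C 0| := by
      rw [Finset.sum_range_succ, Nat.dist_self]
    have hA' : ∑ j ∈ Finset.range i, |C (Nat.dist i j)| = ∑ j ∈ Finset.range i, |C (j + 1)| := by
      rw [← Finset.sum_range_reflect (fun j => |C (Nat.dist i j)|) i]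
      refine Finset.sum_congr rfl fun j hj => ?_
      rw [Finset.mem_range] at hj
      have hd : Nat.dist i (i - 1 - j) = j + 1 := by
        rw [Nat.dist_eq_sub_of_le_right (by omega)]
        omega
      rw [hd]
    have hB : ∑ j ∈ Finset.Ico (i + 1) n, |C (Nat.dist i j)|
        = ∑ k ∈ Finset.range (n - (i + 1)), |C (k + 1)| := by
      rw [Finset.sum_Ico_eq_sum_range]
      refine Finset.sum_congr rfl fun k hk => ?_
      have hd : Nat.dist i (i + 1 + k) = k + 1 := by
        rw [Nat.dist_eq_sub_of_le (by omega)]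
        omega
      rw [hd]
    have hTA : ∑ j ∈ Finset.range i, |C (j + 1)| ≤ S :=
      le_trans (Summable.sum_le_tsum _ (fun k _ => abs_nonneg _) hsum) hS
    have hTB : ∑ k ∈ Finset.range (n - (i + 1)), |C (k + 1)| ≤ S :=
      le_trans (Summable.sum_le_tsum _ (fun k _ => abs_nonneg _) hsum) hS
    rw [hsplit, hA, hA']
    linarith
  -- main computation
  have hpt : ∀ x, ((n : ℝ)⁻¹ * ∑ i ∈ Finset.range n, f (T^[i] x) - m) ^ 2
      = (n : ℝ)⁻¹ ^ 2 * ∑ i ∈ Finset.range n, ∑ j ∈ Finset.range n, g i x * g j x := by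
    intro x
    have h1 : ∑ i ∈ Finset.range n, g i x
        = (∑ i ∈ Finset.range n, f (T^[i] x)) - n * m := by
      simp only [hg]
      rw [Finset.sum_sub_distrib, Finset.sum_const, Finset.card_range, nsmul_eq_mul]
    have h2 : (n : ℝ)⁻¹ * ∑ i ∈ Finset.range n, f (T^[i] x) - m
        = (n : ℝ)⁻¹ * ∑ i ∈ Finset.range n, g i x := by
      rw [h1]; field_simp
    rw [h2, mul_pow]
    congr 1
    rw [sq, Finset.sum_mul_sum]
  calc ∫ x, ((n : ℝ)⁻¹ * ∑ i ∈ Finset.range n, f (T^[i] x) - m) ^ 2 ∂μ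
      = ∫ x, (n : ℝ)⁻¹ ^ 2 * ∑ i ∈ Finset.range n, ∑ j ∈ Finset.range n, g i x * g j x ∂μ :=
        integral_congr_ae (ae_of_all _ fun x => hpt x)
    _ = (n : ℝ)⁻¹ ^ 2 * ∫ x, ∑ i ∈ Finset.range n, ∑ j ∈ Finset.range n, g i x * g j x ∂μ :=
        integral_const_mul _ _
    _ = (n : ℝ)⁻¹ ^ 2 * ∑ i ∈ Finset.range n, ∑ j ∈ Finset.range n, ∫ x, g i x * g j x ∂μ := by
        rw [integral_finset_sum _ fun i _ => integrable_finset_sum _ fun j _ => hgint i j]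
        congr 1
        exact Finset.sum_congr rfl fun i _ => integral_finset_sum _ fun j _ => hgint i j
    _ ≤ (n : ℝ)⁻¹ ^ 2 * (n * (Mf ^ 2 + 2 * S)) := by
        refine mul_le_mul_of_nonneg_left ?_ (by positivity)
        calc ∑ i ∈ Finset.range n, ∑ j ∈ Finset.range n, ∫ x, g i x * g j x ∂μ
            ≤ ∑ i ∈ Finset.range n, ∑ j ∈ Finset.range n, |C (Nat.dist i j)| := by
              refine Finset.sum_le_sum fun i _ => Finset.sum_le_sum fun j _ => ?_
              rw [hEgg' i j]
              exact le_abs_self _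
          _ ≤ ∑ _i ∈ Finset.range n, (Mf ^ 2 + 2 * S) := Finset.sum_le_sum hrow
          _ = n * (Mf ^ 2 + 2 * S) := by rw [Finset.sum_const, Finset.card_range, nsmul_eq_mul]
    _ = (Mf ^ 2 + 2 * S) / n := by field_simp

lemma interp_bound (a b ε : ℝ) (hε : 0 < ε) (m : ℕ) (hm : 1 ≤ m) (hb : b ≤ a + m * ε)
    (g : ℝ → ℝ) (hg : LipschitzWith 1 g) (y : ℝ) (hy : y ∈ Set.Icc a b) :
    |g y - (g a + ∑ j ∈ Finset.range m,
      ((g (a + ((j : ℕ) + 1 : ℕ) * ε) - g (a + (j : ℕ) * ε)) / ε) * hatF (a + (j : ℕ) * ε) ε y)|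
      ≤ 2 * ε := by
  obtain ⟨hya, hyb⟩ := hy
  have hlip : ∀ u v : ℝ, |g u - g v| ≤ |u - v| := by
    intro u v
    have := hg.dist_le_mul u v
    rwa [NNReal.coe_one, one_mul, Real.dist_eq, Real.dist_eq] at this
  set t : ℕ → ℝ := fun j => a + (j : ℕ) * ε with ht
  have htsucc : ∀ j : ℕ, t (j + 1) = t j + ε := by
    intro j; simp only [ht]; push_cast; ring
  have htmono : ∀ {i j : ℕ}, i ≤ j → t i ≤ t j := by
    intro i j hij
    simp only [ht]
    have h : (i : ℝ) ≤ (j : ℝ) := by exact_mod_cast hij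
    nlinarith
  set j0 : ℕ := min (⌊(y - a) / ε⌋₊) (m - 1) with hj0
  have hj0m : j0 < m := by
    have : j0 ≤ m - 1 := min_le_right _ _
    omega
  have hty : t j0 ≤ y := by
    have h1 : j0 ≤ ⌊(y - a) / ε⌋₊ := min_le_left _ _
    have h2 : (⌊(y - a) / ε⌋₊ : ℝ) ≤ (y - a) / ε := Nat.floor_le (div_nonneg (by linarith) hε.le)
    have hfl : (j0 : ℝ) ≤ (y - a) / ε :=
      le_trans (by exact_mod_cast h1) h2
    rw [le_div_iff₀ hε] at hfl
    simp only [ht]; linarith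
  have hyt : y ≤ t (j0 + 1) := by
    rcases le_or_gt (⌊(y - a) / ε⌋₊) (m - 1) with h | h
    · have hj0e : j0 = ⌊(y - a) / ε⌋₊ := min_eq_left h
      have h2 : (y - a) / ε < ⌊(y - a) / ε⌋₊ + 1 := Nat.lt_floor_add_one _
      rw [div_lt_iff₀ hε] at h2
      simp only [ht, hj0e]
      push_cast
      linarith
    · have hj0e : j0 = m - 1 := min_eq_right (le_of_lt h)
      have hj1 : j0 + 1 = m := by omega
      have he : t (j0 + 1) = a + m * ε := by rw [hj1]
      linarith
  -- split the sum
  have hsplit : ∑ j ∈ Finset.range m,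
      ((g (t (j + 1)) - g (t j)) / ε) * hatF (t j) ε y
      = (g (t j0) - g (t 0)) + ((g (t (j0 + 1)) - g (t j0)) / ε) * hatF (t j0) ε y := by
    rw [← Finset.sum_range_add_sum_Ico _ (show j0 + 1 ≤ m by omega), Finset.sum_range_succ]
    have hzero : ∑ j ∈ Finset.Ico (j0 + 1) m, ((g (t (j + 1)) - g (t j)) / ε) * hatF (t j) ε y
        = 0 := by
      refine Finset.sum_eq_zero fun j hj => ?_
      rw [Finset.mem_Ico] at hj
      rw [hatF_of_le _ _ _ hε.le (le_trans hyt (htmono hj.1)), mul_zero]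
    have hfull : ∑ j ∈ Finset.range j0, ((g (t (j + 1)) - g (t j)) / ε) * hatF (t j) ε y
        = ∑ j ∈ Finset.range j0, (g (t (j + 1)) - g (t j)) := by
      refine Finset.sum_congr rfl fun j hj => ?_
      rw [Finset.mem_range] at hj
      rw [hatF_of_ge _ _ _ hε.le (by rw [← htsucc j]; exact le_trans (htmono hj) hty),
        div_mul_cancel₀ _ hε.ne']
    rw [hzero, hfull, add_zero, Finset.sum_range_sub (fun j => g (t j))]
  have hgoal : ∀ j : ℕ, (a + ((j : ℕ) + 1 : ℕ) * ε) = t (j + 1) ∧ (a + (j : ℕ) * ε) = t j := by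
    intro j; constructor <;> simp [ht]
  have hsum_eq : ∑ j ∈ Finset.range m,
      ((g (a + ((j : ℕ) + 1 : ℕ) * ε) - g (a + (j : ℕ) * ε)) / ε) * hatF (a + (j : ℕ) * ε) ε y
      = ∑ j ∈ Finset.range m, ((g (t (j + 1)) - g (t j)) / ε) * hatF (t j) ε y := by
    refine Finset.sum_congr rfl fun j _ => by rw [(hgoal j).1, (hgoal j).2]
  rw [hsum_eq, hsplit]
  have ht0 : t 0 = a := by simp [ht]
  have h1 : |g y - g (t j0)| ≤ ε := by
    have := hlip y (t j0)
    have h2 : |y - t j0| ≤ ε := by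
      rw [abs_le]
      constructor
      · linarith
      · have := htsucc j0; linarith
    linarith
  have h2 : |(g (t (j0 + 1)) - g (t j0)) / ε| ≤ 1 := by
    rw [abs_div, abs_of_pos hε, div_le_one hε]
    calc |g (t (j0 + 1)) - g (t j0)| ≤ |t (j0 + 1) - t j0| := hlip _ _
      _ = ε := by rw [htsucc j0]; simp [abs_of_pos hε]
  have h3 : |hatF (t j0) ε y| ≤ ε := hatF_abs_le _ _ _ hε.le
  have h4 : |((g (t (j0 + 1)) - g (t j0)) / ε) * hatF (t j0) ε y| ≤ ε := by
    rw [abs_mul]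
    calc |(g (t (j0 + 1)) - g (t j0)) / ε| * |hatF (t j0) ε y| ≤ 1 * ε :=
      mul_le_mul h2 h3 (abs_nonneg _) zero_le_one
      _ = ε := one_mul ε
  calc |g y - (g a + ((g (t j0) - g (t 0)) + ((g (t (j0 + 1)) - g (t j0)) / ε) * hatF (t j0) ε y))|
      = |(g y - g (t j0)) - ((g (t (j0 + 1)) - g (t j0)) / ε) * hatF (t j0) ε y| := by
        rw [ht0]; ring_nf
    _ ≤ |g y - g (t j0)| + |((g (t (j0 + 1)) - g (t j0)) / ε) * hatF (t j0) ε y| :=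
        abs_sub _ _
    _ ≤ ε + ε := add_le_add h1 h4
    _ = 2 * ε := by ring

set_option maxHeartbeats 1000000 in
/-- If for every Lipschitz `f` (with Lipschitz constant `Lf` and sup bound `Mf` on `X`)
the auto-covariance function satisfies `∑_{k≥1} |Cov_f(k)| ≤ c (Lf + Mf)²`, then the
expected Kantorovich distance of the empirical measure to `μ` is `O(n^{-1/4})`. -/
theorem expected_kantorovich_empirical_bound
    (X : Set ℝ) (hX : IsCompact X) (T : ℝ → ℝ) (hT : Measurable T)
    (hTX : Set.MapsTo T X X)
    (μ : Measure ℝ) [IsProbabilityMeasure μ] (hμX : μ X = 1) (hinv : μ.map T = μ)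
    (c : ℝ) (hc : 0 < c)
    (hcov : ∀ (f : ℝ → ℝ), Measurable f → ∀ Lf Mf : ℝ,
      (∀ x ∈ X, ∀ y ∈ X, |f x - f y| ≤ Lf * dist x y) →
      (∀ x ∈ X, |f x| ≤ Mf) →
      Summable (fun k : ℕ =>
        |∫ x, f x * f (T^[k + 1] x) ∂μ - (∫ x, f x ∂μ) ^ 2|) ∧
      ∑' k : ℕ, |∫ x, f x * f (T^[k + 1] x) ∂μ - (∫ x, f x ∂μ) ^ 2|
        ≤ c * (Lf + Mf) ^ 2) :
    ∃ B : ℝ, 0 < B ∧ ∀ n : ℕ, 1 ≤ n →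
      ∫ x, kantorovich (empiricalMeasure T n x) μ ∂μ
        ≤ B * (n : ℝ) ^ (-(1 / 4 : ℝ)) := by
  classical
  have hXmeas : MeasurableSet X := hX.isClosed.measurableSet
  have haeX : ∀ᵐ x ∂μ, x ∈ X := by
    rw [ae_iff]
    have : {x | ¬ x ∈ X} = Xᶜ := rfl
    rw [this, measure_compl hXmeas (measure_ne_top μ X), hμX, measure_univ]
    simp
  obtain ⟨R, hR0, hXR⟩ : ∃ R : ℝ, 0 ≤ R ∧ X ⊆ Set.Icc (-R) R := by
    obtain ⟨R, hR0, hR⟩ := hX.isBounded.subset_closedBall_lt 0 0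
    exact ⟨R, le_of_lt hR0, by simpa [Real.closedBall_eq_Icc] using hR⟩
  set C : ℝ := 1 + 8 * c with hCdef
  have hC0 : 0 < C := by positivity
  set B : ℝ := 4 + (2 * R + 2) * Real.sqrt C with hBdef
  have hB0 : 0 < B := by positivity
  refine ⟨B, hB0, ?_⟩
  intro n hn
  have hn0 : (0:ℝ) < n := by exact_mod_cast hn
  have hn1 : (1:ℝ) ≤ n := by exact_mod_cast hn
  set ε : ℝ := (n : ℝ) ^ (-(1 / 4 : ℝ)) with hεdef
  have hε : 0 < ε := Real.rpow_pos_of_pos hn0 _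
  have hε1 : ε ≤ 1 := Real.rpow_le_one_of_one_le_of_nonpos hn1 (by norm_num)
  set m : ℕ := ⌈2 * R / ε⌉₊ + 1 with hmdef
  have hm1 : 1 ≤ m := by omega
  have hbm : R ≤ -R + m * ε := by
    have h1 : 2 * R / ε ≤ (m : ℝ) := by
      have := Nat.le_ceil (2 * R / ε)
      have h2 : ((⌈2 * R / ε⌉₊ : ℕ) : ℝ) ≤ (m : ℝ) := by
        exact_mod_cast Nat.le_succ _
      linarith
    have h2 : 2 * R ≤ (m : ℝ) * ε := by
      rw [div_le_iff₀ hε] at h1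
      linarith
    linarith
  set t : ℕ → ℝ := fun j => -R + (j : ℝ) * ε with htdef
  set L : ℕ → ℝ → ℝ := fun j x =>
    (n : ℝ)⁻¹ * ∑ i ∈ Finset.range n, hatF (t j) ε (T^[i] x) - ∫ y, hatF (t j) ε y ∂μ
    with hLdef
  -- basic facts about the hat functions
  have hFmeas : ∀ j, Measurable (hatF (t j) ε) := fun j => hatF_measurable _ _
  have hFabs : ∀ j y, |hatF (t j) ε y| ≤ ε := fun j y => hatF_abs_le _ _ _ hε.le
  have hFint : ∀ j, Integrable (hatF (t j) ε) μ := fun j =>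
    (integrable_const ε).mono' (hFmeas j).aestronglyMeasurable
      (ae_of_all _ fun y => by simpa using hFabs j y)
  have hIFabs : ∀ j, |∫ y, hatF (t j) ε y ∂μ| ≤ ε := by
    intro j
    have := norm_integral_le_of_norm_le_const (μ := μ) (f := hatF (t j) ε) (C := ε)
      (ae_of_all _ fun y => by simpa using hFabs j y)
    simpa using this
  have hLabs : ∀ j x, |L j x| ≤ 2 * ε := by
    intro j x
    have h1 : |(n : ℝ)⁻¹ * ∑ i ∈ Finset.range n, hatF (t j) ε (T^[i] x)| ≤ ε := by
      rw [abs_mul, abs_inv, Nat.abs_cast]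
      have h2 : |∑ i ∈ Finset.range n, hatF (t j) ε (T^[i] x)| ≤ n * ε := by
        calc |∑ i ∈ Finset.range n, hatF (t j) ε (T^[i] x)|
            ≤ ∑ i ∈ Finset.range n, |hatF (t j) ε (T^[i] x)| :=
              Finset.abs_sum_le_sum_abs _ _
          _ ≤ ∑ _i ∈ Finset.range n, ε := Finset.sum_le_sum fun i _ => hFabs j _
          _ = n * ε := by rw [Finset.sum_const, Finset.card_range, nsmul_eq_mul]
      calc (n:ℝ)⁻¹ * |∑ i ∈ Finset.range n, hatF (t j) ε (T^[i] x)|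
          ≤ (n:ℝ)⁻¹ * (n * ε) := by
            exact mul_le_mul_of_nonneg_left h2 (by positivity)
        _ = ε := by field_simp
    have h3 := hIFabs j
    simp only [hLdef]
    calc |(n : ℝ)⁻¹ * ∑ i ∈ Finset.range n, hatF (t j) ε (T^[i] x)
          - ∫ y, hatF (t j) ε y ∂μ|
        ≤ |(n : ℝ)⁻¹ * ∑ i ∈ Finset.range n, hatF (t j) ε (T^[i] x)|
          + |∫ y, hatF (t j) ε y ∂μ| := abs_sub _ _
      _ ≤ 2 * ε := by linarith
  have hLmeas : ∀ j, Measurable (L j) := by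
    intro j
    apply Measurable.sub _ measurable_const
    exact measurable_const.mul
      (Finset.measurable_sum _ fun i _ => (hFmeas j).comp (hT.iterate i))
  have hLint : ∀ j, Integrable (L j) μ := fun j =>
    (integrable_const (2 * ε)).mono' (hLmeas j).aestronglyMeasurable
      (ae_of_all _ fun x => by simpa using hLabs j x)
  -- pointwise kantorovich bound
  have hkb : ∀ x ∈ X, kantorovich (empiricalMeasure T n x) μ
      ≤ 4 * ε + ∑ j ∈ Finset.range m, |L j x| := by
    intro x hx
    have : Nonempty {g : ℝ → ℝ // LipschitzWith 1 g} := ⟨⟨_root_.id, LipschitzWith.id⟩⟩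
    rw [kantorovich]
    refine ciSup_le fun gp => ?_
    obtain ⟨g, hg⟩ := gp
    simp only []
    rw [integral_empirical]
    have hlip : ∀ u v : ℝ, |g u - g v| ≤ |u - v| := by
      intro u v
      have := hg.dist_le_mul u v
      rwa [NNReal.coe_one, one_mul, Real.dist_eq, Real.dist_eq] at this
    set s : ℕ → ℝ := fun j => (g (t (j + 1)) - g (t j)) / ε with hsdef
    set G : ℝ → ℝ := fun y => g (-R) + ∑ j ∈ Finset.range m, s j * hatF (t j) ε y with hGdef
    have hsabs : ∀ j, |s j| ≤ 1 := by
      intro j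
      rw [hsdef]
      simp only []
      rw [abs_div, abs_of_pos hε, div_le_one hε]
      calc |g (t (j + 1)) - g (t j)| ≤ |t (j + 1) - t j| := hlip _ _
        _ = ε := by
            simp only [htdef]
            push_cast
            rw [show -R + ((j : ℝ) + 1) * ε - (-R + (j : ℝ) * ε) = ε by ring,
              abs_of_pos hε]
    have hGbd : ∀ y ∈ Set.Icc (-R) R, |g y - G y| ≤ 2 * ε := by
      intro y hy
      have h := interp_bound (-R) R ε hε m hm1 (by linarith [hbm]) g hg y hy
      simpa [hGdef, hsdef, htdef] using h
    -- integrability of g and G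
    have hgmeas : Measurable g := hg.continuous.measurable
    have hgi : Integrable g μ := by
      refine (integrable_const (|g (-R)| + 2 * R)).mono' hgmeas.aestronglyMeasurable ?_
      filter_upwards [haeX] with y hy
      obtain ⟨h1, h2⟩ := hXR hy
      have h3 : |g y - g (-R)| ≤ |y - (-R)| := hlip _ _
      have h4 : |y - (-R)| ≤ 2 * R := by rw [abs_le]; constructor <;> linarith
      rw [Real.norm_eq_abs]
      calc |g y| ≤ |g y - g (-R)| + |g (-R)| := by
            have := abs_add_le (g y - g (-R)) (g (-R)); simpa using this
        _ ≤ |g (-R)| + 2 * R := by linarith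
    have hGi : Integrable G μ := by
      rw [hGdef]
      exact (integrable_const _).add
        (integrable_finset_sum _ fun j _ => (hFint j).const_mul _)
    have hgGi : Integrable (fun y => g y - G y) μ := hgi.sub hGi
    -- key algebraic identity
    have e2 : ∫ y, g y ∂μ = (∫ y, (g y - G y) ∂μ) + ∫ y, G y ∂μ := by
      rw [integral_sub hgi hGi]; ring
    have e3 : ∑ i ∈ Finset.range n, G (T^[i] x)
        = n * g (-R) + ∑ j ∈ Finset.range m,
            s j * ∑ i ∈ Finset.range n, hatF (t j) ε (T^[i] x) := by
      simp only [hGdef]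
      rw [Finset.sum_add_distrib, Finset.sum_const, Finset.card_range, nsmul_eq_mul,
        Finset.sum_comm]
      congr 1
      exact Finset.sum_congr rfl fun j _ => by rw [Finset.mul_sum]
    have e4 : ∫ y, G y ∂μ = g (-R) + ∑ j ∈ Finset.range m, s j * ∫ y, hatF (t j) ε y ∂μ := by
      simp only [hGdef]
      rw [integral_add (integrable_const _)
        (integrable_finset_sum _ fun j _ => (hFint j).const_mul _),
        integral_const, probReal_univ, one_smul,
        integral_finset_sum _ fun j _ => (hFint j).const_mul _]
      congr 1
      exact Finset.sum_congr rfl fun j _ => integral_const_mul _ _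
    have e5 : (n : ℝ)⁻¹ * ∑ i ∈ Finset.range n, G (T^[i] x) - ∫ y, G y ∂μ
        = ∑ j ∈ Finset.range m, s j * L j x := by
      have hL' : ∑ j ∈ Finset.range m, s j * L j x
          = (n : ℝ)⁻¹ * (∑ j ∈ Finset.range m,
              s j * ∑ i ∈ Finset.range n, hatF (t j) ε (T^[i] x))
            - ∑ j ∈ Finset.range m, s j * ∫ y, hatF (t j) ε y ∂μ := by
        rw [Finset.mul_sum, ← Finset.sum_sub_distrib]
        refine Finset.sum_congr rfl fun j _ => ?_
        simp only [hLdef]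
        ring
      rw [hL', e3, e4]
      have hnne : (n:ℝ) ≠ 0 := ne_of_gt hn0
      field_simp
      ring
    have e1 : (n : ℝ)⁻¹ * ∑ i ∈ Finset.range n, g (T^[i] x)
        = (n : ℝ)⁻¹ * ∑ i ∈ Finset.range n, (g (T^[i] x) - G (T^[i] x))
          + (n : ℝ)⁻¹ * ∑ i ∈ Finset.range n, G (T^[i] x) := by
      rw [Finset.sum_sub_distrib]
      ring
    have hmain : (n : ℝ)⁻¹ * ∑ i ∈ Finset.range n, g (T^[i] x) - ∫ y, g y ∂μ
        = ((n : ℝ)⁻¹ * ∑ i ∈ Finset.range n, (g (T^[i] x) - G (T^[i] x))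
            - ∫ y, (g y - G y) ∂μ)
          + ∑ j ∈ Finset.range m, s j * L j x := by
      rw [e1, e2, ← e5]
      ring
    -- bound the three pieces
    have hb1 : (n : ℝ)⁻¹ * ∑ i ∈ Finset.range n, (g (T^[i] x) - G (T^[i] x)) ≤ 2 * ε := by
      have h1 : ∑ i ∈ Finset.range n, (g (T^[i] x) - G (T^[i] x)) ≤ n * (2 * ε) := by
        calc ∑ i ∈ Finset.range n, (g (T^[i] x) - G (T^[i] x))
            ≤ ∑ _i ∈ Finset.range n, 2 * ε := by
              refine Finset.sum_le_sum fun i _ => ?_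
              have hmem : T^[i] x ∈ X := hTX.iterate i hx
              have := hGbd (T^[i] x) (hXR hmem)
              exact le_trans (le_abs_self _) this
          _ = n * (2 * ε) := by rw [Finset.sum_const, Finset.card_range, nsmul_eq_mul]
      calc (n : ℝ)⁻¹ * ∑ i ∈ Finset.range n, (g (T^[i] x) - G (T^[i] x))
          ≤ (n : ℝ)⁻¹ * (n * (2 * ε)) := mul_le_mul_of_nonneg_left h1 (by positivity)
        _ = 2 * ε := by field_simp
    have hb2 : |∫ y, (g y - G y) ∂μ| ≤ 2 * ε := by
      have := norm_integral_le_of_norm_le_const (μ := μ) (f := fun y => g y - G y)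
        (C := 2 * ε) ?_
      · simpa using this
      · filter_upwards [haeX] with y hy
        simpa using hGbd y (hXR hy)
    have hb3 : ∑ j ∈ Finset.range m, s j * L j x ≤ ∑ j ∈ Finset.range m, |L j x| := by
      refine Finset.sum_le_sum fun j _ => ?_
      calc s j * L j x ≤ |s j * L j x| := le_abs_self _
        _ = |s j| * |L j x| := abs_mul _ _
        _ ≤ 1 * |L j x| := mul_le_mul_of_nonneg_right (hsabs j) (abs_nonneg _)
        _ = |L j x| := one_mul _
    rw [hmain]
    have := abs_le.mp hb2
    linarith
  -- per-index integral bound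
  set δ : ℝ := Real.sqrt (C / n) with hδdef
  have hδ : 0 < δ := Real.sqrt_pos.mpr (by positivity)
  have hδ2 : δ ^ 2 = C / n := Real.sq_sqrt (by positivity)
  have hLj : ∀ j, ∫ x, |L j x| ∂μ ≤ δ := by
    intro j
    have hf := hFmeas j
    have hcovj := hcov (hatF (t j) ε) hf 1 ε
      (fun u _ v _ => by
        have h := (hatF_lip (t j) ε).dist_le_mul u v
        rwa [NNReal.coe_one, Real.dist_eq] at h)
      (fun u _ => hFabs j u)
    have hsum : Summable (fun k : ℕ => |covFn T μ (hatF (t j) ε) (k + 1)|) := by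
      simpa [covFn] using hcovj.1
    have hts : ∑' k : ℕ, |covFn T μ (hatF (t j) ε) (k + 1)| ≤ 4 * c := by
      have h1 : ∑' k : ℕ, |covFn T μ (hatF (t j) ε) (k + 1)| ≤ c * (1 + ε) ^ 2 := by
        simpa [covFn] using hcovj.2
      have h2 : c * (1 + ε) ^ 2 ≤ 4 * c := by
        nlinarith [mul_nonneg (mul_nonneg hc.le hε.le) (sub_nonneg.mpr hε1),
          mul_nonneg hc.le (sub_nonneg.mpr hε1)]
      linarith
    have hvar := variance_bound T hT μ hinv (hatF (t j) ε) hf ε (hFabs j) (4 * c)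
      hsum hts n hn
    have hvar2 : ∫ x, (L j x) ^ 2 ∂μ ≤ C / n := by
      have h1 : (ε ^ 2 + 2 * (4 * c)) / n ≤ C / n := by
        have h2 : ε ^ 2 + 2 * (4 * c) ≤ C := by
          rw [hCdef]
          nlinarith [hε.le, hε1]
        exact (div_le_div_iff_of_pos_right hn0).mpr h2
      have h0 : ∫ x, (L j x) ^ 2 ∂μ ≤ (ε ^ 2 + 2 * (4 * c)) / n := by
        simp only [hLdef]
        exact hvar
      linarith
    -- pointwise AM-GM bound   |L| ≤ (L² + δ²)/(2δ)
    have hpt : ∀ x, |L j x| ≤ ((L j x) ^ 2 + δ ^ 2) / (2 * δ) := by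
      intro x
      rw [le_div_iff₀ (by positivity)]
      nlinarith [sq_nonneg (|L j x| - δ), sq_abs (L j x), abs_nonneg (L j x)]
    have hint1 : Integrable (fun x => |L j x|) μ := (hLint j).abs
    have hintsq : Integrable (fun x => (L j x) ^ 2) μ := by
      refine (integrable_const ((2 * ε) ^ 2)).mono'
        ((hLmeas j).pow_const 2).aestronglyMeasurable (ae_of_all _ fun x => ?_)
      rw [Real.norm_eq_abs, abs_pow]
      have := hLabs j x
      have h0 : (0:ℝ) ≤ |L j x| := abs_nonneg _
      nlinarith
    calc ∫ x, |L j x| ∂μ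
        ≤ ∫ x, ((L j x) ^ 2 + δ ^ 2) / (2 * δ) ∂μ := by
          refine integral_mono hint1 ?_ hpt
          exact (hintsq.add (integrable_const _)).div_const _
      _ = (2 * δ)⁻¹ * ((∫ x, (L j x) ^ 2 ∂μ) + δ ^ 2) := by
          rw [show (fun x => ((L j x) ^ 2 + δ ^ 2) / (2 * δ))
              = fun x => (2 * δ)⁻¹ * ((L j x) ^ 2 + δ ^ 2) by
              funext x; rw [div_eq_inv_mul]]
          rw [integral_const_mul, integral_add hintsq (integrable_const _),
            integral_const, probReal_univ, one_smul]
      _ ≤ (2 * δ)⁻¹ * (C / n + δ ^ 2) := by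
          refine mul_le_mul_of_nonneg_left ?_ (by positivity)
          linarith [hvar2]
      _ = δ := by
          rw [← hδ2]
          field_simp
          ring
  -- integrate the pointwise bound
  set Φ : ℝ → ℝ := fun x => 4 * ε + ∑ j ∈ Finset.range m, |L j x| with hΦdef
  have hΦint : Integrable Φ μ := by
    rw [hΦdef]
    exact (integrable_const _).add (integrable_finset_sum _ fun j _ => (hLint j).abs)
  have hκΦ : ∀ᵐ x ∂μ, kantorovich (empiricalMeasure T n x) μ ≤ Φ x := by
    filter_upwards [haeX] with x hx
    exact hkb x hx
  have hΦval : ∫ x, Φ x ∂μ ≤ 4 * ε + m * δ := by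
    rw [hΦdef]
    rw [integral_add (integrable_const _) (integrable_finset_sum _ fun j _ => (hLint j).abs),
      integral_const, probReal_univ, one_smul,
      integral_finset_sum _ fun j _ => (hLint j).abs]
    have : ∑ j ∈ Finset.range m, ∫ x, |L j x| ∂μ ≤ ∑ _j ∈ Finset.range m, δ :=
      Finset.sum_le_sum fun j _ => hLj j
    rw [Finset.sum_const, Finset.card_range, nsmul_eq_mul] at this
    linarith
  -- final arithmetic
  have hfinal : 4 * ε + m * δ ≤ B * (n : ℝ) ^ (-(1 / 4 : ℝ)) := by
    have hm_le : (m : ℝ) ≤ 2 * R / ε + 2 := by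
      have h1 := Nat.ceil_lt_add_one (show (0:ℝ) ≤ 2 * R / ε by positivity)
      have h2 : (m : ℝ) = (⌈2 * R / ε⌉₊ : ℝ) + 1 := by rw [hmdef]; push_cast; ring
      linarith
    set v : ℝ := (n : ℝ) ^ (-(1 / 2 : ℝ)) with hvdef
    have hv : 0 < v := Real.rpow_pos_of_pos hn0 _
    have hδv : δ = Real.sqrt C * v := by
      have h1 : (Real.sqrt (n:ℝ))⁻¹ = v := by
        rw [Real.sqrt_eq_rpow, hvdef, ← Real.rpow_neg hn0.le]
      rw [hδdef, Real.sqrt_div hC0.le, div_eq_mul_inv, h1]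
    have hεinv : ε⁻¹ = (n : ℝ) ^ ((1 / 4 : ℝ)) := by
      rw [hεdef, ← Real.rpow_neg hn0.le, neg_neg]
    have h14 : (n:ℝ) ^ ((1/4 : ℝ)) * v = ε := by
      rw [hvdef, hεdef, ← Real.rpow_add hn0]
      norm_num
    have h12 : v ≤ ε := by
      rw [hvdef, hεdef]
      exact Real.rpow_le_rpow_of_exponent_le hn1 (by norm_num)
    have hsC : 0 ≤ Real.sqrt C := Real.sqrt_nonneg _
    calc 4 * ε + m * δ
        ≤ 4 * ε + (2 * R / ε + 2) * (Real.sqrt C * v) := by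
          refine add_le_add_right ?_ _
          rw [← hδv]
          exact mul_le_mul_of_nonneg_right hm_le hδ.le
      _ = 4 * ε + 2 * R * Real.sqrt C * (ε⁻¹ * v) + 2 * (Real.sqrt C * v) := by
          rw [div_eq_mul_inv]; ring
      _ = 4 * ε + 2 * R * Real.sqrt C * ε + 2 * (Real.sqrt C * v) := by
          rw [hεinv, h14]
      _ ≤ 4 * ε + 2 * R * Real.sqrt C * ε + 2 * (Real.sqrt C * ε) := by
          have : Real.sqrt C * v ≤ Real.sqrt C * ε := mul_le_mul_of_nonneg_left h12 hsC
          linarith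
      _ = B * ε := by rw [hBdef]; ring
  by_cases hi : Integrable (fun x => kantorovich (empiricalMeasure T n x) μ) μ
  · calc ∫ x, kantorovich (empiricalMeasure T n x) μ ∂μ
        ≤ ∫ x, Φ x ∂μ := integral_mono_ae hi hΦint hκΦ
      _ ≤ 4 * ε + m * δ := hΦval
      _ ≤ B * (n : ℝ) ^ (-(1 / 4 : ℝ)) := hfinal
  · rw [integral_undef hi]
    positivity
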